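/- Fix a density φ, a capacity c ∈ (0,1), and the correlated decision rule U_n(s) = s/n. For every Nash equilibrium f_N of the N-firm instance with thresholds τ given by the Nash equilibrium characterization, τ_1 < 1/Mmax(f_N). Consequently, for any sequence (f_N)_{N≥2} of Nash equilibria of the N-firm instances, the first threshold τ_1 = τ_1(f_N) satisfies lim_{N → ∞} τ_1(f_N) = 0. -/

import Mathlib

open MeasureTheory Set Filter Topology

noncomputable section

/-- The measure of a set `A` under the score density `φ`. -/
def dMeas (φ : ℝ → ℝ) (A : Set ℝ) : ℝ := ∫ s in A, φ s

/-- `K` is a finite union of closed intervals. -/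
def FinUnionIntervals (K : Set ℝ) : Prop :=
  ∃ (n : ℕ) (a b : Fin n → ℝ), K = ⋃ i, Set.Icc (a i) (b i)

/-- A feasible strategy: a finite union of closed intervals inside `[0,1]`
with `φ`-measure at most the capacity `c`. -/
def Feasible (φ : ℝ → ℝ) (c : ℝ) (K : Set ℝ) : Prop :=
  K ⊆ Set.Icc (0:ℝ) 1 ∧ FinUnionIntervals K ∧ dMeas φ K ≤ c

/-- `M(s;K)`: the number of firms interviewing an applicant with score `s`. -/
def numFirms {N : ℕ} (K : Fin N → Set ℝ) (s : ℝ) : ℕ :=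
  Nat.card {i : Fin N // s ∈ K i}

/-- `Mmax(K)`: the maximal congestion over scores in `[0,1]`. -/
def maxFirms {N : ℕ} (K : Fin N → Set ℝ) : ℕ :=
  sSup ((fun s => numFirms K s) '' Set.Icc (0:ℝ) 1)

/-- Firm `i`'s expected utility under the profile `K`. -/
def utility (φ : ℝ → ℝ) (U : ℕ → ℝ → ℝ) {N : ℕ} (K : Fin N → Set ℝ) (i : Fin N) : ℝ :=
  ∫ s in K i, U (numFirms K s) s * φ s

/-- Social welfare: the total utility of all firms. -/
def SW (φ : ℝ → ℝ) (U : ℕ → ℝ → ℝ) {N : ℕ} (K : Fin N → Set ℝ) : ℝ :=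
  ∑ i, utility φ U K i

/-- Nash equilibrium: every strategy is feasible and no firm can strictly
increase its utility by a unilateral feasible deviation. -/
def NashEq (φ : ℝ → ℝ) (c : ℝ) (U : ℕ → ℝ → ℝ) {N : ℕ} (K : Fin N → Set ℝ) : Prop :=
  (∀ i, Feasible φ c (K i)) ∧
  ∀ (i : Fin N) (K' : Set ℝ), Feasible φ c K' →
    utility φ U (Function.update K i K') i ≤ utility φ U K i

/-- Correlated decision rule: `U_n(s) = s / n`. -/
def Ucorr : ℕ → ℝ → ℝ := fun n s => s / n

/-- Independent decision rule: `U_n(s) = (1 - (1-s)^n) / n`. -/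
def Uindep : ℕ → ℝ → ℝ := fun n s => (1 - (1 - s) ^ n) / n

/-- The threshold structure associated with a Nash equilibrium:
`τ 0 = 0`, `τ (N+1) = 1`, the thresholds are nondecreasing, every firm uses its
full capacity, exactly `m` firms interview scores in `[τ m, τ (m+1))`, and the
utilities at the thresholds are nondecreasing. -/
def IsThresholds (φ : ℝ → ℝ) (c : ℝ) (U : ℕ → ℝ → ℝ) {N : ℕ}
    (K : Fin N → Set ℝ) (τ : ℕ → ℝ) : Prop :=
  τ 0 = 0 ∧ τ (N + 1) = 1 ∧ (∀ k, k ≤ N → τ k ≤ τ (k + 1)) ∧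
  (∀ i, dMeas φ (K i) = c) ∧
  (∀ m, m ≤ maxFirms K → ∀ s ∈ Set.Ico (τ m) (τ (m + 1)), numFirms K s = m) ∧
  (∀ n m, 1 ≤ n → n < m → m ≤ maxFirms K → U n (τ n) ≤ U m (τ m))

/-! ### Auxiliary lemmas -/


lemma FinUnionIntervals.isClosed {K : Set ℝ} (h : FinUnionIntervals K) : IsClosed K := by
  obtain ⟨n, a, b, rfl⟩ := h
  exact isClosed_iUnion_of_finite fun i => isClosed_Icc

lemma FinUnionIntervals.measurableSet {K : Set ℝ} (h : FinUnionIntervals K) :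
    MeasurableSet K := by
  obtain ⟨n, a, b, rfl⟩ := h
  exact MeasurableSet.iUnion fun i => measurableSet_Icc

open Classical in
lemma numFirms_eq_card {N : ℕ} (K : Fin N → Set ℝ) (s : ℝ) :
    numFirms K s = (Finset.univ.filter fun i => s ∈ K i).card := by
  rw [numFirms, Nat.card_eq_fintype_card, Fintype.card_subtype]

lemma numFirms_le {N : ℕ} (K : Fin N → Set ℝ) (s : ℝ) : numFirms K s ≤ N := by
  classical
  rw [numFirms_eq_card]
  exact le_trans (Finset.card_filter_le _ _) (by simp)

lemma le_numFirms {N : ℕ} {K : Fin N → Set ℝ} {s : ℝ} {i : Fin N} (h : s ∈ K i) :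
    1 ≤ numFirms K s := by
  have : Nonempty {j : Fin N // s ∈ K j} := ⟨⟨i, h⟩⟩
  exact Nat.card_pos

lemma numFirms_le_maxFirms {N : ℕ} (K : Fin N → Set ℝ) {s : ℝ} (hs : s ∈ Set.Icc (0:ℝ) 1) :
    numFirms K s ≤ maxFirms K := by
  apply le_csSup
  · exact ⟨N, by rintro x ⟨t, _, rfl⟩; exact numFirms_le K t⟩
  · exact ⟨s, hs, rfl⟩

lemma maxFirms_mem {N : ℕ} (K : Fin N → Set ℝ) :
    ∃ s ∈ Set.Icc (0:ℝ) 1, numFirms K s = maxFirms K := by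
  have h : maxFirms K ∈ (fun s => numFirms K s) '' Set.Icc (0:ℝ) 1 := by
    apply Nat.sSup_mem
    · exact ⟨numFirms K 0, ⟨0, by simp, rfl⟩⟩
    · exact ⟨N, by rintro x ⟨t, _, rfl⟩; exact numFirms_le K t⟩
  obtain ⟨s, hs, h⟩ := h
  exact ⟨s, hs, h⟩

open Classical in
lemma numFirms_eq_N {N : ℕ} {K : Fin N → Set ℝ} {s : ℝ} (h : ∀ i, s ∈ K i) :
    numFirms K s = N := by
  rw [numFirms, Nat.card_eq_fintype_card, Fintype.card_subtype,
    Finset.filter_true_of_mem (fun i _ => h i), Finset.card_univ, Fintype.card_fin]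

lemma dMeas_null {φ : ℝ → ℝ} {A : Set ℝ} (h : volume A = 0) : dMeas φ A = 0 := by
  rw [dMeas, Measure.restrict_eq_zero.mpr h, integral_zero_measure]

lemma tau_mono {N : ℕ} {τ : ℕ → ℝ} (hmono : ∀ k, k ≤ N → τ k ≤ τ (k + 1)) :
    ∀ k l, k ≤ l → l ≤ N + 1 → τ k ≤ τ l := by
  intro k l hkl
  induction hkl with
  | refl => intro _; exact le_rfl
  | @step l' h ih =>
      intro hl
      exact le_trans (ih (by omega)) (hmono l' (by omega))

section Structural

variable {N : ℕ} {K : Fin N → Set ℝ} {τ : ℕ → ℝ}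

open Classical in
lemma seg_lemma (h0 : τ 0 = 0) (hN1 : τ (N + 1) = 1)
    (hmono : ∀ k, k ≤ N → τ k ≤ τ (k + 1))
    (hseg : ∀ m, m ≤ maxFirms K → ∀ s ∈ Set.Ico (τ m) (τ (m + 1)), numFirms K s = m)
    (hM1 : τ (maxFirms K) = 1)
    {b : ℝ} (hb0 : 0 ≤ b) (hb1 : b < 1) :
    ∃ m, m < maxFirms K ∧ τ m ≤ b ∧ b < τ (m + 1) ∧ numFirms K b = m := by
  set P : ℕ → Prop := fun k => τ k ≤ b with hP
  set m := Nat.findGreatest P (N + 1) with hm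
  have hP0 : P 0 := by simp [hP, h0, hb0]
  have hspec : τ m ≤ b := Nat.findGreatest_spec (Nat.zero_le _) hP0
  have hmle : m ≤ N + 1 := Nat.findGreatest_le _
  have hmN : m ≤ N := by
    rcases Nat.lt_or_ge m (N + 1) with h | h
    · omega
    · exfalso; have : m = N + 1 := by omega
      rw [this, hN1] at hspec; linarith
  have hlt : b < τ (m + 1) := by
    by_contra h
    exact Nat.findGreatest_is_greatest (lt_add_one m) (by omega) (le_of_not_gt (by simpa using h))
  have hmM : m < maxFirms K := by
    by_contra h
    have : τ (maxFirms K) ≤ τ m := tau_mono hmono _ _ (le_of_not_gt h) (by omega)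
    rw [hM1] at this; linarith
  exact ⟨m, hmM, hspec, hlt, hseg m (le_of_lt hmM) b ⟨hspec, hlt⟩⟩

open Classical in
/-- Right-propagation: if the segment structure holds and `b < 1` is in `K j`,
then a small right-neighborhood of `b` is in `K j`. -/
lemma right_prop (hclosed : ∀ i, IsClosed (K i))
    (hSEG : ∀ b : ℝ, 0 ≤ b → b < 1 →
      ∃ m, m < maxFirms K ∧ τ m ≤ b ∧ b < τ (m + 1) ∧ numFirms K b = m)
    (hseg : ∀ m, m ≤ maxFirms K → ∀ s ∈ Set.Ico (τ m) (τ (m + 1)), numFirms K s = m)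
    {b : ℝ} {j : Fin N} (hb0 : 0 ≤ b) (hb1 : b < 1) (hbj : b ∈ K j) :
    ∃ ε > 0, Set.Ico b (b + ε) ⊆ K j := by
  obtain ⟨m, hmM, hτm, hτm1, hnum⟩ := hSEG b hb0 hb1
  set C : Set ℝ := ⋃ i ∈ {i : Fin N | b ∉ K i}, K i with hC
  have hCclosed : IsClosed C := (Set.toFinite _).isClosed_biUnion (fun i _ => hclosed i)
  have hbC : b ∉ C := by
    simp only [hC, Set.mem_iUnion]
    rintro ⟨i, hi, hbi⟩
    exact hi hbi
  obtain ⟨ε1, hε1, hball⟩ := Metric.isOpen_iff.1 hCclosed.isOpen_compl b hbC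
  refine ⟨min ε1 (τ (m + 1) - b), by simp [hε1]; linarith, ?_⟩
  rintro u ⟨hbu, hub⟩
  have huC : u ∉ C := by
    apply hball
    rw [Metric.mem_ball, Real.dist_eq, abs_of_nonneg (by linarith)]
    have := lt_of_lt_of_le hub (add_le_add_right (min_le_left _ _) b)
    linarith
  have hsub : (Finset.univ.filter fun i => u ∈ K i) ⊆ (Finset.univ.filter fun i => b ∈ K i) := by
    intro i hi
    simp only [Finset.mem_filter, Finset.mem_univ, true_and] at hi ⊢
    by_contra hbi
    exact huC (Set.mem_biUnion (by exact hbi) hi)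
  have hnumu : numFirms K u = m := by
    apply hseg m (le_of_lt hmM)
    constructor
    · linarith
    · have := lt_of_lt_of_le hub (add_le_add_right (min_le_right _ _) b)
      linarith
  have heq := Finset.eq_of_subset_of_card_le hsub
    (by rw [← numFirms_eq_card, ← numFirms_eq_card, hnum, hnumu])
  have : j ∈ Finset.univ.filter fun i => u ∈ K i := by
    rw [heq]; simp [hbj]
  simpa using this

/-- Monotone coverage: if `s ∈ K j` and `s ≤ t < 1` then `t ∈ K j`. -/
lemma claimC (hclosed : ∀ i, IsClosed (K i))
    (hSEG : ∀ b : ℝ, 0 ≤ b → b < 1 →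
      ∃ m, m < maxFirms K ∧ τ m ≤ b ∧ b < τ (m + 1) ∧ numFirms K b = m)
    (hseg : ∀ m, m ≤ maxFirms K → ∀ s ∈ Set.Ico (τ m) (τ (m + 1)), numFirms K s = m)
    {s t : ℝ} {j : Fin N} (hs0 : 0 ≤ s) (hst : s ≤ t) (ht1 : t < 1) (hsj : s ∈ K j) :
    t ∈ K j := by
  set A : Set ℝ := {u | u ∈ Set.Icc s t ∧ Set.Icc s u ⊆ K j} with hA
  have hAne : A.Nonempty := ⟨s, ⟨le_rfl, hst⟩, by rw [Set.Icc_self]; simpa using hsj⟩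
  have hAbdd : BddAbove A := ⟨t, fun u hu => hu.1.2⟩
  set b := sSup A with hb
  have hsA : s ∈ A := ⟨⟨le_rfl, hst⟩, by rw [Set.Icc_self]; simpa using hsj⟩
  have hsb : s ≤ b := le_csSup hAbdd hsA
  have hbt : b ≤ t := csSup_le hAne (fun u hu => hu.1.2)
  have hIco : Set.Ico s b ⊆ K j := by
    rintro u ⟨h1, h2⟩
    obtain ⟨a, haA, hua⟩ := exists_lt_of_lt_csSup hAne h2
    exact haA.2 ⟨h1, le_of_lt hua⟩
  have hbj : b ∈ K j := by
    rcases eq_or_lt_of_le hsb with h | h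
    · rwa [← h]
    · have hbc : b ∈ closure (Set.Ico s b) := by
        rw [closure_Ico (ne_of_lt h)]
        exact ⟨hsb, le_rfl⟩
      exact (hclosed j).closure_subset ((closure_mono hIco).trans
        (by rw [(hclosed j).closure_eq]) hbc)
  have hIcc : Set.Icc s b ⊆ K j := by
    rintro u ⟨h1, h2⟩
    rcases eq_or_lt_of_le h2 with h | h
    · rwa [h]
    · exact hIco ⟨h1, h⟩
  rcases eq_or_lt_of_le hbt with hbeq | hblt
  · rw [← hbeq]; exact hbj
  · exfalso
    obtain ⟨ε, hε, hprop⟩ := right_prop hclosed hSEG hseg (le_trans hs0 hsb)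
      (lt_of_le_of_lt hbt ht1) hbj
    set u := min (b + ε / 2) t with hu
    have hbu : b < u := lt_min (by linarith) hblt
    have huA : u ∈ A := by
      refine ⟨⟨le_trans hsb (le_of_lt hbu), min_le_right _ _⟩, ?_⟩
      rintro w ⟨hw1, hw2⟩
      rcases le_or_gt w b with h | h
      · exact hIcc ⟨hw1, h⟩
      · apply hprop
        refine ⟨le_of_lt h, ?_⟩
        have : w ≤ b + ε / 2 := le_trans hw2 (min_le_left _ _)
        linarith
    exact absurd (le_csSup hAbdd huA) (not_le.mpr hbu)

/-- In the degenerate situation `τ (Mmax) = 1`, we reach a contradiction. -/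
lemma degen_contradiction (hN : 2 ≤ N)
    (hclosed : ∀ i, IsClosed (K i)) (hsub : ∀ i, K i ⊆ Set.Icc (0:ℝ) 1)
    (hSEG : ∀ b : ℝ, 0 ≤ b → b < 1 →
      ∃ m, m < maxFirms K ∧ τ m ≤ b ∧ b < τ (m + 1) ∧ numFirms K b = m)
    (hseg : ∀ m, m ≤ maxFirms K → ∀ s ∈ Set.Ico (τ m) (τ (m + 1)), numFirms K s = m)
    (hMN : maxFirms K ≤ N)
    (hne : ∀ j, ∃ s, s ∈ K j ∧ s < 1) : False := by
  haveI : NeZero N := ⟨by omega⟩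
  choose sf hsf hsf1 using hne
  have huniv : (Finset.univ : Finset (Fin N)).Nonempty := Finset.univ_nonempty
  set t := Finset.sup' Finset.univ huniv sf with ht
  obtain ⟨j0, _, hj0⟩ := Finset.exists_mem_eq_sup' huniv sf
  have ht1 : t < 1 := by rw [ht, hj0]; exact hsf1 j0
  have ht0 : 0 ≤ t := by
    rw [ht, hj0]; exact ((hsub j0) (hsf j0)).1
  have htK : ∀ j, t ∈ K j := by
    intro j
    exact claimC hclosed hSEG hseg ((hsub j) (hsf j)).1
      (Finset.le_sup' sf (Finset.mem_univ j)) ht1 (hsf j)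
  have hNt : numFirms K t = N := numFirms_eq_N htK
  obtain ⟨m, hmM, _, _, hm⟩ := hSEG t ht0 ht1
  omega

end Structural

open Classical in
lemma cap_counting {φ : ℝ → ℝ} {c : ℝ} {N : ℕ} {K : Fin N → Set ℝ}
    (hφint : ∫ s in Set.Icc (0:ℝ) 1, φ s = 1)
    (hφpos : ∀ s ∈ Set.Icc (0:ℝ) 1, 0 < φ s)
    (hsub : ∀ i, K i ⊆ Set.Icc (0:ℝ) 1)
    (hmeas : ∀ i, MeasurableSet (K i))
    (hcap : ∀ i, dMeas φ (K i) = c) :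
    (N : ℝ) * c ≤ (maxFirms K : ℝ) := by
  have hInt : IntegrableOn φ (Set.Icc (0:ℝ) 1) := by
    by_contra h
    rw [integral_undef h] at hφint
    exact one_ne_zero hφint.symm
  have hrepr : ∀ i, dMeas φ (K i) = ∫ s in Set.Icc (0:ℝ) 1, (K i).indicator φ s := by
    intro i
    rw [setIntegral_indicator (hmeas i), Set.inter_eq_self_of_subset_right (hsub i)]
    rfl
  have hIntInd : ∀ i, IntegrableOn ((K i).indicator φ) (Set.Icc (0:ℝ) 1) :=
    fun i => hInt.indicator (hmeas i)
  have hsum : (N : ℝ) * c = ∫ s in Set.Icc (0:ℝ) 1, ∑ i, (K i).indicator φ s := by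
    rw [integral_finset_sum _ (fun i _ => hIntInd i)]
    simp_rw [← hrepr, hcap, Finset.sum_const, Finset.card_univ, Fintype.card_fin,
      nsmul_eq_mul]
  rw [hsum]
  have hle : ∫ s in Set.Icc (0:ℝ) 1, ∑ i, (K i).indicator φ s
      ≤ ∫ s in Set.Icc (0:ℝ) 1, (maxFirms K : ℝ) * φ s := by
    apply setIntegral_mono_on (integrable_finset_sum _ (fun i _ => hIntInd i))
      (hInt.const_mul _) measurableSet_Icc
    intro s hs
    have : ∑ i, (K i).indicator φ s = (numFirms K s : ℝ) * φ s := by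
      simp_rw [Set.indicator_apply]
      rw [← Finset.sum_filter, Finset.sum_const, nsmul_eq_mul, numFirms_eq_card]
    rw [this]
    apply mul_le_mul_of_nonneg_right _ (le_of_lt (hφpos s hs))
    exact_mod_cast numFirms_le_maxFirms K hs
  calc _ ≤ _ := hle
    _ = (maxFirms K : ℝ) := by rw [integral_const_mul, hφint, mul_one]

/-- **Lemma (the first threshold vanishes, correlated rule).**
For every Nash equilibrium of the `N`-firm instance with the correlated rule
and thresholds `τ`, one has `τ_1 < 1 / Mmax`; consequently, along any sequence
of Nash equilibria of the `N`-firm instances, `τ_1(f_N) → 0`. -/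
theorem tau_one_vanishes_correlated
    (φ : ℝ → ℝ)
    (hφm : Measurable φ) (hφpos : ∀ s ∈ Set.Icc (0:ℝ) 1, 0 < φ s)
    (hφint : ∫ s in Set.Icc (0:ℝ) 1, φ s = 1)
    (c : ℝ) (hc : 0 < c) (hc1 : c < 1) :
    (∀ (N : ℕ) (K : Fin N → Set ℝ) (τ : ℕ → ℝ), 2 ≤ N →
      NashEq φ c Ucorr K → IsThresholds φ c Ucorr K τ →
      τ 1 < 1 / (maxFirms K : ℝ)) ∧
    (∀ (f : (N : ℕ) → Fin N → Set ℝ) (τ : (N : ℕ) → ℕ → ℝ),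
      (∀ N, 2 ≤ N → NashEq φ c Ucorr (f N) ∧ IsThresholds φ c Ucorr (f N) (τ N)) →
      Tendsto (fun N => τ N 1) atTop (𝓝 0)) := by
  
  have P1 : ∀ (N : ℕ) (K : Fin N → Set ℝ) (τ : ℕ → ℝ), 2 ≤ N →
      NashEq φ c Ucorr K → IsThresholds φ c Ucorr K τ →
      τ 1 < 1 / (maxFirms K : ℝ) := by
    intro N K τ hN hNash hT
    obtain ⟨hfeas, -⟩ := hNash
    obtain ⟨h0, hN1, hmono, hcap, hseg, hU⟩ := hT
    have hsub : ∀ i, K i ⊆ Set.Icc (0:ℝ) 1 := fun i => (hfeas i).1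
    have hclosed : ∀ i, IsClosed (K i) := fun i => (hfeas i).2.1.isClosed
    have hne : ∀ j, ∃ s, s ∈ K j ∧ s < 1 := by
      intro j
      by_contra h
      push_neg at h
      have hKj : K j ⊆ ({1} : Set ℝ) := by
        intro s hs
        have h1 : s ≤ 1 := ((hsub j) hs).2
        have h2 : 1 ≤ s := h s hs
        simp [le_antisymm h1 h2]
      have : dMeas φ (K j) = 0 :=
        dMeas_null (measure_mono_null hKj Real.volume_singleton)
      rw [hcap j] at this
      linarith
    have hM1 : 1 ≤ maxFirms K := by
      haveI : NeZero N := ⟨by omega⟩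
      obtain ⟨s, hs, hs1⟩ := hne 0
      exact le_trans (le_numFirms hs) (numFirms_le_maxFirms K ((hsub 0) hs))
    have hMN : maxFirms K ≤ N := by
      obtain ⟨s, _, he⟩ := maxFirms_mem K
      rw [← he]
      exact numFirms_le K s
    by_contra hcon
    push_neg at hcon
    have hMpos : (0:ℝ) < (maxFirms K : ℝ) := by exact_mod_cast hM1
    have hτ1le : τ 1 ≤ 1 := by
      have := tau_mono hmono 1 (N + 1) (by omega) le_rfl
      rwa [hN1] at this
    have hτMle : τ (maxFirms K) ≤ 1 := by
      have := tau_mono hmono (maxFirms K) (N + 1) (by omega) le_rfl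
      rwa [hN1] at this
    have hτM : τ (maxFirms K) = 1 := by
      rcases eq_or_lt_of_le hM1 with h1 | h2
      · apply le_antisymm hτMle
        rw [← h1]
        have : (1:ℝ) / (maxFirms K : ℝ) = 1 := by rw [← h1]; norm_num
        linarith [hcon, this]
      · have hUc := hU 1 (maxFirms K) le_rfl h2 le_rfl
        have hdiv : τ 1 ≤ τ (maxFirms K) / (maxFirms K : ℝ) := by
          simpa [Ucorr] using hUc
        apply le_antisymm hτMle
        have h1M : (1:ℝ) / (maxFirms K : ℝ) ≤ τ (maxFirms K) / (maxFirms K : ℝ) :=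
          le_trans hcon hdiv
        exact (div_le_div_iff_of_pos_right hMpos).1 h1M
    exact degen_contradiction hN hclosed hsub
      (fun b hb0 hb1 => seg_lemma h0 hN1 hmono hseg hτM hb0 hb1) hseg hMN hne
  refine ⟨P1, ?_⟩
  intro f τ h
  have key : ∀ N : ℕ, 2 ≤ N → 0 ≤ τ N 1 ∧ τ N 1 ≤ (((N : ℝ)) * c)⁻¹ := by
    intro N hN
    obtain ⟨hNash, hT⟩ := h N hN
    have hlt := P1 N (f N) (τ N) hN hNash hT
    obtain ⟨h0, hN1, hmono, hcap, hseg, hU⟩ := hT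
    have h01 : 0 ≤ τ N 1 := by
      have := hmono 0 (by omega)
      rw [h0] at this
      simpa using this
    have hcount : (N : ℝ) * c ≤ (maxFirms (f N) : ℝ) :=
      cap_counting hφint hφpos (fun i => (hNash.1 i).1)
        (fun i => (hNash.1 i).2.1.measurableSet) hcap
    have hNc : (0:ℝ) < (N : ℝ) * c := by
      have : (0:ℝ) < (N : ℝ) := by exact_mod_cast (by omega : 0 < N)
      positivity
    have : (1:ℝ) / (maxFirms (f N) : ℝ) ≤ 1 / ((N : ℝ) * c) :=
      one_div_le_one_div_of_le hNc hcount
    rw [one_div ((N:ℝ) * c)] at this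
    exact ⟨h01, le_trans (le_of_lt hlt) this⟩
  have htend : Tendsto (fun N : ℕ => (((N : ℝ)) * c)⁻¹) atTop (𝓝 0) :=
    (tendsto_natCast_atTop_atTop.atTop_mul_const hc).inv_tendsto_atTop
  apply tendsto_of_tendsto_of_tendsto_of_le_of_le' tendsto_const_nhds htend
  · exact eventually_atTop.2 ⟨2, fun N hN => (key N hN).1⟩
  · exact eventually_atTop.2 ⟨2, fun N hN => (key N hN).2⟩
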